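/- arXiv:2403.11332 — 2 statements merged into one kernel-verified Lean document; each statement's English description precedes it below -/
import Mathlib

section
/- In the partially linear network model, the partialled-out equation holds: Y − ℓ₀ = θ₀ • (T − m₀) + α₀ • (fun ω => A.mulVec ((T − m₀) ω)) + ε^Y almost surely; that is, Y − E[Y ∣ 𝒢] = (θ₀ I + α₀ A) applied to (T − E[T ∣ 𝒢]) plus ε^Y, almost surely. -/
open MeasureTheory ProbabilityTheory
open scoped RealInnerProductSpace ENNReal

/-- Conditional expectation commutes with a continuous linear map. -/
lemma condexp_clm_comm {Ω : Type*} {m m0 : MeasurableSpace Ω} {μ : Measure Ω}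
    [IsFiniteMeasure μ]
    {E F : Type*} [NormedAddCommGroup E] [NormedSpace ℝ E] [CompleteSpace E]
    [NormedAddCommGroup F] [NormedSpace ℝ F] [CompleteSpace F]
    (hm : m ≤ m0) (L : E →L[ℝ] F) {f : Ω → E} (hf : Integrable f μ) :
    condExp m μ (L ∘ f) =ᵐ[μ] fun ω => L (condExp m μ f ω) := by
  haveI : SigmaFinite (μ.trim hm) := inferInstance
  refine (ae_eq_condExp_of_forall_setIntegral_eq hm (L.integrable_comp hf)
    (fun s _ _ => (L.integrable_comp integrable_condExp).integrableOn)
    (fun s hs hμs => ?_) ?_).symm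
  · rw [L.integral_comp_comm integrable_condExp.integrableOn,
      setIntegral_condExp hm hf hs, ← L.integral_comp_comm hf.integrableOn]
  · exact StronglyMeasurable.aestronglyMeasurable
      (L.continuous.comp_stronglyMeasurable stronglyMeasurable_condExp)

/-- The action of the matrix `A` on vectors, `A.mulVec`, viewed as a map of
`EuclideanSpace ℝ (Fin n)` (it is definitionally `A.mulVec`). -/
noncomputable def mulVecE {n : ℕ} (A : Matrix (Fin n) (Fin n) ℝ)
    (v : EuclideanSpace ℝ (Fin n)) : EuclideanSpace ℝ (Fin n) :=
  WithLp.toLp 2 (A.mulVec v)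

/-- `mulVecE` as a continuous linear map on Euclidean space. -/
noncomputable def mulVecCLM {n : ℕ} (A : Matrix (Fin n) (Fin n) ℝ) :
    EuclideanSpace ℝ (Fin n) →L[ℝ] EuclideanSpace ℝ (Fin n) :=
  LinearMap.toContinuousLinearMap
    { toFun := mulVecE A
      map_add' := fun x y => congrArg (WithLp.toLp 2) (Matrix.mulVec_add A x y)
      map_smul' := fun c x => congrArg (WithLp.toLp 2) (A.mulVec_smul c x) }

lemma mulVecCLM_apply {n : ℕ} (A : Matrix (Fin n) (Fin n) ℝ)
    (v : EuclideanSpace ℝ (Fin n)) : mulVecCLM A v = mulVecE A v := rfl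

/-- In the partially linear network model, the partialled-out equation
`Y − ℓ₀ = θ₀ • (T − m₀) + α₀ • (A.mulVec ∘ (T − m₀)) + ε^Y` holds almost surely,
where `m₀ = E[T ∣ 𝒢]` and `ℓ₀ = E[Y ∣ 𝒢]`. -/
theorem partialled_out_equation
    {Ω : Type*} {ℱ : MeasurableSpace Ω} {P : Measure Ω} [IsProbabilityMeasure P]
    {n : ℕ} (A : Matrix (Fin n) (Fin n) ℝ)
    (𝒢 ℋ : MeasurableSpace Ω) (h𝒢ℋ : 𝒢 ≤ ℋ) (hℋℱ : ℋ ≤ ℱ)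
    (T g εY Y : Ω → EuclideanSpace ℝ (Fin n)) (θ₀ α₀ : ℝ)
    (hT_meas : StronglyMeasurable[ℋ] T) (hT_int : Integrable T P)
    (hg_meas : StronglyMeasurable[𝒢] g) (hg_int : Integrable g P)
    (hεY_int : Integrable εY P)
    (hεY_cond : P[εY|ℋ] =ᵐ[P] 0)
    (hY : Y = θ₀ • T + α₀ • (fun ω => mulVecE A (T ω)) + g + εY) :
    Y - P[Y|𝒢] =ᵐ[P]
      θ₀ • (T - P[T|𝒢]) + α₀ • (fun ω => mulVecE A ((T - P[T|𝒢]) ω)) + εY := by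
  have h𝒢ℱ : 𝒢 ≤ ℱ := h𝒢ℋ.trans hℋℱ
  haveI : SigmaFinite (P.trim h𝒢ℱ) := inferInstance
  haveI : SigmaFinite (P.trim hℋℱ) := inferInstance
  set L := mulVecCLM A with hLdef
  have hLT : (fun ω => mulVecE A (T ω)) = L ∘ T := rfl
  have hAT_int : Integrable (fun ω => mulVecE A (T ω)) P := by
    rw [hLT]; exact L.integrable_comp hT_int
  have hf1_int : Integrable (θ₀ • T) P := hT_int.smul θ₀
  have hf2_int : Integrable (α₀ • fun ω => mulVecE A (T ω)) P := hAT_int.smul α₀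
  -- conditional expectation of εY given 𝒢 is 0
  have hε : condExp 𝒢 P εY =ᵐ[P] 0 := by
    have h1 : condExp 𝒢 P εY =ᵐ[P] condExp 𝒢 P (condExp ℋ P εY) :=
      (condExp_condExp_of_le h𝒢ℋ hℋℱ).symm
    refine h1.trans ((condExp_congr_ae hεY_cond).trans ?_)
    rw [condExp_zero]
  -- compute P[Y|𝒢]
  have hcY : condExp 𝒢 P Y =ᵐ[P]
      θ₀ • condExp 𝒢 P T + α₀ • (fun ω => mulVecE A (condExp 𝒢 P T ω)) + g := by
    rw [hY]
    have h2 : condExp 𝒢 P (θ₀ • T + α₀ • (fun ω => mulVecE A (T ω)) + g + εY) =ᵐ[P]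
        condExp 𝒢 P (θ₀ • T + α₀ • (fun ω => mulVecE A (T ω)) + g) + condExp 𝒢 P εY :=
      condExp_add ((hf1_int.add hf2_int).add hg_int) hεY_int 𝒢
    have h3 : condExp 𝒢 P (θ₀ • T + α₀ • (fun ω => mulVecE A (T ω)) + g) =ᵐ[P]
        condExp 𝒢 P (θ₀ • T + α₀ • (fun ω => mulVecE A (T ω))) + condExp 𝒢 P g :=
      condExp_add (hf1_int.add hf2_int) hg_int 𝒢
    have h4 : condExp 𝒢 P (θ₀ • T + α₀ • (fun ω => mulVecE A (T ω))) =ᵐ[P]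
        condExp 𝒢 P (θ₀ • T) + condExp 𝒢 P (α₀ • fun ω => mulVecE A (T ω)) :=
      condExp_add hf1_int hf2_int 𝒢
    have h5 : condExp 𝒢 P (θ₀ • T) =ᵐ[P] θ₀ • condExp 𝒢 P T := condExp_smul θ₀ T 𝒢
    have h6 : condExp 𝒢 P (α₀ • fun ω => mulVecE A (T ω)) =ᵐ[P]
        α₀ • condExp 𝒢 P (fun ω => mulVecE A (T ω)) := condExp_smul α₀ _ 𝒢
    have h7 : condExp 𝒢 P (fun ω => mulVecE A (T ω)) =ᵐ[P]
        fun ω => mulVecE A (condExp 𝒢 P T ω) := by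
      rw [hLT]
      exact condexp_clm_comm h𝒢ℱ L hT_int
    have h8 : condExp 𝒢 P g = g := condExp_of_stronglyMeasurable h𝒢ℱ hg_meas hg_int
    calc condExp 𝒢 P (θ₀ • T + α₀ • (fun ω => mulVecE A (T ω)) + g + εY)
        =ᵐ[P] condExp 𝒢 P (θ₀ • T + α₀ • (fun ω => mulVecE A (T ω)) + g)
              + condExp 𝒢 P εY := h2
      _ =ᵐ[P] (condExp 𝒢 P (θ₀ • T)
              + condExp 𝒢 P (α₀ • fun ω => mulVecE A (T ω)) + g) + 0 := by
          refine Filter.EventuallyEq.add ?_ hε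
          refine h3.trans ?_
          rw [h8]
          exact Filter.EventuallyEq.add h4 Filter.EventuallyEq.rfl
      _ =ᵐ[P] θ₀ • condExp 𝒢 P T
              + α₀ • (fun ω => mulVecE A (condExp 𝒢 P T ω)) + g := by
          rw [add_zero]
          refine Filter.EventuallyEq.add (Filter.EventuallyEq.add h5 ?_) Filter.EventuallyEq.rfl
          exact h6.trans (h7.const_smul α₀)
  filter_upwards [hcY] with ω h
  have hLsub : mulVecE A (T ω - condExp 𝒢 P T ω)
      = mulVecE A (T ω) - mulVecE A (condExp 𝒢 P T ω) := map_sub L _ _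
  simp only [hY, Pi.add_apply, Pi.smul_apply, Pi.sub_apply] at h ⊢
  rw [h, hLsub, smul_sub, smul_sub]
  abel
end

section
/- For every n and every matrix B ∈ Matrix (Fin n) (Fin n) ℝ, the 2n × 2n block matrix [[−Bᵀ ⬝ B, Bᵀ], [B, −I]] (with I the n × n identity) is not invertible; equivalently, its determinant is 0. -/
open Matrix

/-- For every `n ≥ 1` and every `B ∈ Matrix (Fin n) (Fin n) ℝ`, the
`2n × 2n` block matrix `[[−Bᵀ⬝B, Bᵀ], [B, −I]]` is not invertible; equivalently, its
determinant is `0`. -/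
theorem hessian_nuisance_block_singular
    (n : ℕ) (hn : 0 < n) (B : Matrix (Fin n) (Fin n) ℝ) :
    ¬ IsUnit (Matrix.fromBlocks (-(Bᵀ * B)) Bᵀ B (-1 : Matrix (Fin n) (Fin n) ℝ)) ∧
    (Matrix.fromBlocks (-(Bᵀ * B)) Bᵀ B (-1 : Matrix (Fin n) (Fin n) ℝ)).det = 0 := by
  haveI : Nonempty (Fin n) := ⟨⟨0, hn⟩⟩
  haveI : Invertible (1 : Matrix (Fin n) (Fin n) ℝ) := invertibleOne
  haveI : Invertible (-1 : Matrix (Fin n) (Fin n) ℝ) :=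
    invertibleNeg (1 : Matrix (Fin n) (Fin n) ℝ)
  have h1 : ⅟(-1 : Matrix (Fin n) (Fin n) ℝ) = -1 := by
    have := invOf_neg (1 : Matrix (Fin n) (Fin n) ℝ)
    rw [this, invOf_one]
  have hdet : (Matrix.fromBlocks (-(Bᵀ * B)) Bᵀ B
      (-1 : Matrix (Fin n) (Fin n) ℝ)).det = 0 := by
    rw [Matrix.det_fromBlocks₂₂, h1]
    have : -(Bᵀ * B) - Bᵀ * (-1) * B = 0 := by
      simp [Matrix.mul_assoc]
    rw [this, Matrix.det_zero, mul_zero]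
  refine ⟨?_, hdet⟩
  intro h
  rw [Matrix.isUnit_iff_isUnit_det, hdet] at h
  simp at h
end
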